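/- Let S, U, V, X₁, X₂, Y be jointly distributed random variables taking values in finite sets such that (U,V) ↔ (S,X₁,X₂) ↔ Y is a Markov chain, i.e., I(U,V ; Y | S,X₁,X₂) = 0. Then I(U,V,X₁,X₂ ; Y) - I(U,V,X₁,X₂ ; S) ≤ I(V,X₁,X₂ ; Y) - I(V,X₁,X₂ ; S). -/

import Mathlib

open scoped BigOperators
open Classical

noncomputable section

/-- Probability that the random variable `X` equals `x` under the pmf `p`. -/
def pr {Ω α : Type*} [Fintype Ω] (p : Ω → ℝ) (X : Ω → α) (x : α) : ℝ :=
  ∑ ω : Ω, if X ω = x then p ω else 0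

/-- Shannon entropy (in bits), with the convention `0 · log₂ 0 = 0`. -/
def ent {Ω α : Type*} [Fintype Ω] (p : Ω → ℝ) (X : Ω → α) : ℝ :=
  -∑ x ∈ Finset.univ.image X, pr p X x * Real.logb 2 (pr p X x)

/-- Conditional entropy `H(X|Y) = H(X,Y) - H(Y)`. -/
def condEnt {Ω α β : Type*} [Fintype Ω] (p : Ω → ℝ) (X : Ω → α) (Y : Ω → β) : ℝ :=
  ent p (fun ω => (X ω, Y ω)) - ent p Y

/-- Mutual information `I(X;Y) = H(X) + H(Y) - H(X,Y)`. -/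
def mi {Ω α β : Type*} [Fintype Ω] (p : Ω → ℝ) (X : Ω → α) (Y : Ω → β) : ℝ :=
  ent p X + ent p Y - ent p (fun ω => (X ω, Y ω))

/-- Conditional mutual information `I(X;Y|Z) = H(X,Z) + H(Y,Z) - H(X,Y,Z) - H(Z)`. -/
def cmi {Ω α β γ : Type*} [Fintype Ω] (p : Ω → ℝ) (X : Ω → α) (Y : Ω → β) (Z : Ω → γ) : ℝ :=
  ent p (fun ω => (X ω, Z ω)) + ent p (fun ω => (Y ω, Z ω))
    - ent p (fun ω => (X ω, Y ω, Z ω)) - ent p Z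

/-- `p` is a probability mass function on the finite sample space `Ω`. -/
def IsPMF {Ω : Type*} [Fintype Ω] (p : Ω → ℝ) : Prop :=
  (∀ ω, 0 ≤ p ω) ∧ ∑ ω : Ω, p ω = 1

/-- The random variables `X` and `Y` are independent under `p`. -/
def IndepRV {Ω α β : Type*} [Fintype Ω] (p : Ω → ℝ) (X : Ω → α) (Y : Ω → β) : Prop :=
  ∀ x y, pr p (fun ω => (X ω, Y ω)) (x, y) = pr p X x * pr p Y y

end


section
variable {Ω α β γ : Type*} [Fintype Ω]

lemma pr_nonneg (p : Ω → ℝ) (hp0 : ∀ ω, 0 ≤ p ω) (X : Ω → α) (x : α) : 0 ≤ pr p X x := by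
  apply Finset.sum_nonneg; intro ω _; split <;> simp [hp0 ω]

lemma le_pr_self (p : Ω → ℝ) (hp0 : ∀ ω, 0 ≤ p ω) (X : Ω → α) (ω : Ω) :
    p ω ≤ pr p X (X ω) := by
  classical
  have h := Finset.single_le_sum (f := fun ω' => if X ω' = X ω then p ω' else 0)
    (fun i _ => by split <;> simp [hp0 i]) (Finset.mem_univ ω)
  simpa [pr] using h

lemma sum_weight (p : Ω → ℝ) (W : Ω → α) (F : α → ℝ) :
    ∑ ω : Ω, p ω * F (W ω) = ∑ t ∈ Finset.univ.image W, pr p W t * F t := by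
  classical
  have h : ∀ t, pr p W t * F t = ∑ ω : Ω, (if W ω = t then p ω * F t else 0) := by
    intro t
    unfold pr
    rw [Finset.sum_mul]
    exact Finset.sum_congr rfl (fun ω _ => by split <;> simp
      )
  rw [Finset.sum_congr rfl (fun t _ => h t), Finset.sum_comm]
  refine Finset.sum_congr rfl (fun ω _ => ?_)
  rw [Finset.sum_ite_eq]
  simp [Finset.mem_image_of_mem]

lemma ent_eq (p : Ω → ℝ) (X : Ω → α) :
    ent p X = -∑ ω : Ω, p ω * Real.logb 2 (pr p X (X ω)) := by
  rw [ent, sum_weight p X (fun t => Real.logb 2 (pr p X t))]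

lemma sum_pr_eq_one (p : Ω → ℝ) (hp1 : ∑ ω : Ω, p ω = 1) (W : Ω → α) :
    ∑ t ∈ Finset.univ.image W, pr p W t = 1 := by
  have := sum_weight p W (fun _ => 1)
  simpa [hp1] using this.symm

lemma pr_margin (p : Ω → ℝ) (X : Ω → α) (Z : Ω → γ) (z : γ) :
    ∑ x ∈ Finset.univ.image X, pr p (fun ω => (X ω, Z ω)) (x, z) = pr p Z z := by
  classical
  unfold pr
  rw [Finset.sum_comm]
  refine Finset.sum_congr rfl (fun ω _ => ?_)
  beta_reduce
  simp only [Prod.mk.injEq, ite_and]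
  rw [Finset.sum_ite_eq]
  simp [Finset.mem_image_of_mem]

end

section
variable {Ω α β γ : Type*} [Fintype Ω]

lemma pr_pair_le (p : Ω → ℝ) (hp0 : ∀ ω, 0 ≤ p ω) (X : Ω → α) (Z : Ω → γ) (x : α) (z : γ) :
    pr p (fun ω => (X ω, Z ω)) (x, z) ≤ pr p Z z := by
  classical
  apply Finset.sum_le_sum
  intro ω _
  beta_reduce
  split_ifs with h1 h2 <;> simp_all [Prod.ext_iff, hp0 ω]

lemma cmi_nonneg (p : Ω → ℝ) (hp : IsPMF p) (X : Ω → α) (Y : Ω → β) (Z : Ω → γ) :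
    0 ≤ cmi p X Y Z := by
  letI : DecidableEq (α × β × γ) := fun a b => Classical.propDecidable _
  obtain ⟨hp0, hp1⟩ := hp
  set F : α × β × γ → ℝ := fun t =>
    pr p (fun ω => (X ω, Z ω)) (t.1, t.2.2) * pr p (fun ω => (Y ω, Z ω)) (t.2.1, t.2.2)
      / (pr p (fun ω => (X ω, Y ω, Z ω)) t * pr p Z t.2.2) with hF
  have key : cmi p X Y Z =
      -∑ ω : Ω, p ω * (Real.logb 2 (pr p (fun ω' => (X ω', Z ω')) (X ω, Z ω))
        + Real.logb 2 (pr p (fun ω' => (Y ω', Z ω')) (Y ω, Z ω))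
        - Real.logb 2 (pr p (fun ω' => (X ω', Y ω', Z ω')) (X ω, Y ω, Z ω))
        - Real.logb 2 (pr p Z (Z ω))) := by
    unfold cmi
    rw [ent_eq, ent_eq, ent_eq, ent_eq]
    have hr : ∀ (w x y z : ℝ), -w + -x - -y - -z = -(w + x - y - z) := by intros; ring
    rw [hr]
    congr 1
    rw [← Finset.sum_add_distrib, ← Finset.sum_sub_distrib, ← Finset.sum_sub_distrib]
    exact Finset.sum_congr rfl (fun ω _ => by ring)
  rw [key, neg_nonneg]
  have hlog2 : (0:ℝ) < Real.log 2 := Real.log_pos (by norm_num)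
  -- termwise bound by (p * F - p)/log 2
  have hterm : ∀ ω ∈ (Finset.univ : Finset Ω),
      p ω * (Real.logb 2 (pr p (fun ω' => (X ω', Z ω')) (X ω, Z ω))
        + Real.logb 2 (pr p (fun ω' => (Y ω', Z ω')) (Y ω, Z ω))
        - Real.logb 2 (pr p (fun ω' => (X ω', Y ω', Z ω')) (X ω, Y ω, Z ω))
        - Real.logb 2 (pr p Z (Z ω)))
      ≤ (p ω * F (X ω, Y ω, Z ω) - p ω) / Real.log 2 := by
    intro ω _
    by_cases hω : p ω = 0
    · simp [hω]
    · have hpω : 0 < p ω := lt_of_le_of_ne (hp0 ω) (Ne.symm hω)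
      have ha : 0 < pr p (fun ω' => (X ω', Z ω')) (X ω, Z ω) :=
        lt_of_lt_of_le hpω (le_pr_self p hp0 (fun ω' => (X ω', Z ω')) ω)
      have hb : 0 < pr p (fun ω' => (Y ω', Z ω')) (Y ω, Z ω) :=
        lt_of_lt_of_le hpω (le_pr_self p hp0 (fun ω' => (Y ω', Z ω')) ω)
      have hc : 0 < pr p (fun ω' => (X ω', Y ω', Z ω')) (X ω, Y ω, Z ω) :=
        lt_of_lt_of_le hpω (le_pr_self p hp0 (fun ω' => (X ω', Y ω', Z ω')) ω)
      have hd : 0 < pr p Z (Z ω) := lt_of_lt_of_le hpω (le_pr_self p hp0 Z ω)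
      have htF : F (X ω, Y ω, Z ω) =
          pr p (fun ω' => (X ω', Z ω')) (X ω, Z ω) * pr p (fun ω' => (Y ω', Z ω')) (Y ω, Z ω)
            / (pr p (fun ω' => (X ω', Y ω', Z ω')) (X ω, Y ω, Z ω) * pr p Z (Z ω)) := rfl
      have htpos : 0 < F (X ω, Y ω, Z ω) := by rw [htF]; positivity
      have hlogeq : Real.logb 2 (pr p (fun ω' => (X ω', Z ω')) (X ω, Z ω))
          + Real.logb 2 (pr p (fun ω' => (Y ω', Z ω')) (Y ω, Z ω))
          - Real.logb 2 (pr p (fun ω' => (X ω', Y ω', Z ω')) (X ω, Y ω, Z ω))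
          - Real.logb 2 (pr p Z (Z ω)) = Real.logb 2 (F (X ω, Y ω, Z ω)) := by
        rw [htF, Real.logb_div (by positivity) (by positivity),
          Real.logb_mul ha.ne' hb.ne', Real.logb_mul hc.ne' hd.ne']
        ring
      rw [hlogeq]
      have hlt : Real.logb 2 (F (X ω, Y ω, Z ω)) ≤ (F (X ω, Y ω, Z ω) - 1) / Real.log 2 := by
        rw [Real.logb]
        gcongr
        exact Real.log_le_sub_one_of_pos htpos
      calc p ω * Real.logb 2 (F (X ω, Y ω, Z ω))
          ≤ p ω * ((F (X ω, Y ω, Z ω) - 1) / Real.log 2) :=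
            mul_le_mul_of_nonneg_left hlt (hp0 ω)
        _ = (p ω * F (X ω, Y ω, Z ω) - p ω) / Real.log 2 := by ring
  -- the T ≤ 1 bound
  have hps : ∀ (f : α × β × γ → ℝ),
      ∑ t ∈ Finset.univ.image X ×ˢ (Finset.univ.image Y ×ˢ Finset.univ.image Z), f t
        = ∑ x ∈ Finset.univ.image X, ∑ y ∈ Finset.univ.image Y, ∑ z ∈ Finset.univ.image Z,
            f (x, y, z) := by
    intro f
    rw [Finset.sum_product]
    exact Finset.sum_congr rfl (fun x _ => by rw [Finset.sum_product])
  have hT : ∑ ω : Ω, p ω * F (X ω, Y ω, Z ω) ≤ 1 := by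
    rw [sum_weight p (fun ω => (X ω, Y ω, Z ω)) F]
    have hsub : Finset.univ.image (fun ω => (X ω, Y ω, Z ω)) ⊆
        Finset.univ.image X ×ˢ (Finset.univ.image Y ×ˢ Finset.univ.image Z) := by
      intro t ht
      simp only [Finset.mem_image, Finset.mem_univ, true_and] at ht
      obtain ⟨ω, rfl⟩ := ht
      simp [Finset.mem_product, Finset.mem_image_of_mem]
    have hnn : ∀ t ∈ Finset.univ.image X ×ˢ (Finset.univ.image Y ×ˢ Finset.univ.image Z),
        t ∉ Finset.univ.image (fun ω => (X ω, Y ω, Z ω)) →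
        0 ≤ pr p (fun ω => (X ω, Y ω, Z ω)) t * F t := by
      intro t _ _
      have h1 := pr_nonneg p hp0 (fun ω => (X ω, Y ω, Z ω)) t
      have h2 : 0 ≤ F t := by
        have hA := pr_nonneg p hp0 (fun ω => (X ω, Z ω)) (t.1, t.2.2)
        have hB := pr_nonneg p hp0 (fun ω => (Y ω, Z ω)) (t.2.1, t.2.2)
        have hD := pr_nonneg p hp0 Z t.2.2
        have hFt : F t = pr p (fun ω => (X ω, Z ω)) (t.1, t.2.2)
            * pr p (fun ω => (Y ω, Z ω)) (t.2.1, t.2.2)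
            / (pr p (fun ω => (X ω, Y ω, Z ω)) t * pr p Z t.2.2) := rfl
        rw [hFt]
        positivity
      exact mul_nonneg h1 h2
    calc ∑ t ∈ Finset.univ.image (fun ω => (X ω, Y ω, Z ω)),
            pr p (fun ω => (X ω, Y ω, Z ω)) t * F t
        ≤ ∑ t ∈ Finset.univ.image X ×ˢ (Finset.univ.image Y ×ˢ Finset.univ.image Z),
            pr p (fun ω => (X ω, Y ω, Z ω)) t * F t :=
          Finset.sum_le_sum_of_subset_of_nonneg hsub hnn
      _ ≤ ∑ t ∈ Finset.univ.image X ×ˢ (Finset.univ.image Y ×ˢ Finset.univ.image Z),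
            pr p (fun ω => (X ω, Z ω)) (t.1, t.2.2) * pr p (fun ω => (Y ω, Z ω)) (t.2.1, t.2.2)
              / pr p Z t.2.2 := by
          apply Finset.sum_le_sum
          intro t _
          have hA := pr_nonneg p hp0 (fun ω => (X ω, Z ω)) (t.1, t.2.2)
          have hB := pr_nonneg p hp0 (fun ω => (Y ω, Z ω)) (t.2.1, t.2.2)
          have hD := pr_nonneg p hp0 Z t.2.2
          have hFt : F t = pr p (fun ω => (X ω, Z ω)) (t.1, t.2.2)
              * pr p (fun ω => (Y ω, Z ω)) (t.2.1, t.2.2)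
              / (pr p (fun ω => (X ω, Y ω, Z ω)) t * pr p Z t.2.2) := rfl
          rw [hFt]
          rcases eq_or_ne (pr p (fun ω => (X ω, Y ω, Z ω)) t) 0 with hC | hC
          · rw [hC, zero_mul]
            positivity
          · rcases eq_or_ne (pr p Z t.2.2) 0 with hD0 | hD0
            · simp [hD0]
            · have heq : pr p (fun ω => (X ω, Y ω, Z ω)) t *
                  (pr p (fun ω => (X ω, Z ω)) (t.1, t.2.2) * pr p (fun ω => (Y ω, Z ω)) (t.2.1, t.2.2)
                    / (pr p (fun ω => (X ω, Y ω, Z ω)) t * pr p Z t.2.2))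
                  = pr p (fun ω => (X ω, Z ω)) (t.1, t.2.2)
                    * pr p (fun ω => (Y ω, Z ω)) (t.2.1, t.2.2) / pr p Z t.2.2 := by
                field_simp
              rw [heq]
      _ = ∑ x ∈ Finset.univ.image X, ∑ y ∈ Finset.univ.image Y, ∑ z ∈ Finset.univ.image Z,
            pr p (fun ω => (X ω, Z ω)) (x, z) * pr p (fun ω => (Y ω, Z ω)) (y, z)
              / pr p Z z := by
          rw [hps (fun t => pr p (fun ω => (X ω, Z ω)) (t.1, t.2.2)
            * pr p (fun ω => (Y ω, Z ω)) (t.2.1, t.2.2) / pr p Z t.2.2)]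
      _ = ∑ x ∈ Finset.univ.image X, ∑ z ∈ Finset.univ.image Z, ∑ y ∈ Finset.univ.image Y,
            pr p (fun ω => (X ω, Z ω)) (x, z) * pr p (fun ω => (Y ω, Z ω)) (y, z)
              / pr p Z z :=
          Finset.sum_congr rfl (fun x _ => Finset.sum_comm)
      _ = ∑ z ∈ Finset.univ.image Z, ∑ x ∈ Finset.univ.image X, ∑ y ∈ Finset.univ.image Y,
            pr p (fun ω => (X ω, Z ω)) (x, z) * pr p (fun ω => (Y ω, Z ω)) (y, z)
              / pr p Z z :=
          Finset.sum_comm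
      _ = ∑ z ∈ Finset.univ.image Z, pr p Z z := by
          refine Finset.sum_congr rfl (fun z _ => ?_)
          have hy : ∀ x, ∑ y ∈ Finset.univ.image Y,
              pr p (fun ω => (X ω, Z ω)) (x, z) * pr p (fun ω => (Y ω, Z ω)) (y, z)
                / pr p Z z
              = pr p (fun ω => (X ω, Z ω)) (x, z) * pr p Z z / pr p Z z := by
            intro x
            rw [← Finset.sum_div, ← Finset.mul_sum, pr_margin p Y Z z]
          calc ∑ x ∈ Finset.univ.image X, ∑ y ∈ Finset.univ.image Y,
                pr p (fun ω => (X ω, Z ω)) (x, z) * pr p (fun ω => (Y ω, Z ω)) (y, z)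
                  / pr p Z z
              = ∑ x ∈ Finset.univ.image X,
                pr p (fun ω => (X ω, Z ω)) (x, z) * pr p Z z / pr p Z z :=
                Finset.sum_congr rfl (fun x _ => hy x)
            _ = pr p Z z * pr p Z z / pr p Z z := by
                rw [← Finset.sum_div, ← Finset.sum_mul, pr_margin p X Z z]
            _ = pr p Z z := by
                rcases eq_or_ne (pr p Z z) 0 with h0 | h0
                · simp [h0]
                · rw [mul_div_assoc, div_self h0, mul_one]
      _ = 1 := sum_pr_eq_one p hp1 Z
  calc ∑ ω : Ω, p ω * (Real.logb 2 (pr p (fun ω' => (X ω', Z ω')) (X ω, Z ω))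
        + Real.logb 2 (pr p (fun ω' => (Y ω', Z ω')) (Y ω, Z ω))
        - Real.logb 2 (pr p (fun ω' => (X ω', Y ω', Z ω')) (X ω, Y ω, Z ω))
        - Real.logb 2 (pr p Z (Z ω)))
      ≤ ∑ ω : Ω, (p ω * F (X ω, Y ω, Z ω) - p ω) / Real.log 2 :=
        Finset.sum_le_sum hterm
    _ = ((∑ ω : Ω, p ω * F (X ω, Y ω, Z ω)) - 1) / Real.log 2 := by
        rw [← Finset.sum_div, Finset.sum_sub_distrib, hp1]
    _ ≤ 0 := by
        apply div_nonpos_of_nonpos_of_nonneg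
        · linarith
        · exact hlog2.le
end

section
variable {Ω α β : Type*} [Fintype Ω]

lemma ent_congr_inj (p : Ω → ℝ) (X : Ω → α) (X' : Ω → β)
    (f : α → β) (hf : Function.Injective f) (h : ∀ ω, X' ω = f (X ω)) :
    ent p X' = ent p X := by
  classical
  unfold ent
  have himg : Finset.univ.image X' = (Finset.univ.image X).image f := by
    ext b
    simp only [Finset.mem_image, Finset.mem_univ, true_and]
    constructor
    · rintro ⟨ω, rfl⟩
      exact ⟨X ω, ⟨ω, rfl⟩, (h ω).symm⟩
    · rintro ⟨a, ⟨ω, rfl⟩, rfl⟩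
      exact ⟨ω, h ω⟩
  have hpr : ∀ a, pr p X' (f a) = pr p X a := by
    intro a
    unfold pr
    refine Finset.sum_congr rfl (fun ω _ => ?_)
    rw [h ω]
    simp [hf.eq_iff]
  rw [himg, Finset.sum_image (fun a _ b _ hab => hf hab)]
  congr 1
  exact Finset.sum_congr rfl (fun a _ => by rw [hpr a])

lemma ent_eq_of_inv (p : Ω → ℝ) (X : Ω → α) (X' : Ω → β) (f : α → β) (g : β → α)
    (hgf : ∀ a, g (f a) = a) (h : ∀ ω, X' ω = f (X ω)) : ent p X' = ent p X :=
  ent_congr_inj p X X' f (Function.LeftInverse.injective hgf) h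

end


/-- If `(U,V) ↔ (S,X₁,X₂) ↔ Y` is a Markov chain, then
`I(U,V,X₁,X₂ ; Y) - I(U,V,X₁,X₂ ; S) ≤ I(V,X₁,X₂ ; Y) - I(V,X₁,X₂ ; S)`. -/
theorem remove_aux_U_sum_rate
    {Ω 𝒮 𝒰 𝒱 𝒳₁ 𝒳₂ 𝒴 : Type*} [Fintype Ω] [Fintype 𝒮] [Fintype 𝒰] [Fintype 𝒱]
    [Fintype 𝒳₁] [Fintype 𝒳₂] [Fintype 𝒴]
    (p : Ω → ℝ) (hp : IsPMF p)
    (S : Ω → 𝒮) (U : Ω → 𝒰) (V : Ω → 𝒱) (X₁ : Ω → 𝒳₁) (X₂ : Ω → 𝒳₂) (Y : Ω → 𝒴)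
    (hMarkov : cmi p (fun ω => (U ω, V ω)) Y (fun ω => (S ω, X₁ ω, X₂ ω)) = 0) :
    mi p (fun ω => (U ω, V ω, X₁ ω, X₂ ω)) Y - mi p (fun ω => (U ω, V ω, X₁ ω, X₂ ω)) S
      ≤ mi p (fun ω => (V ω, X₁ ω, X₂ ω)) Y - mi p (fun ω => (V ω, X₁ ω, X₂ ω)) S := by
  have h1 : 0 ≤ cmi p V Y (fun ω => (S ω, X₁ ω, X₂ ω)) := cmi_nonneg p hp V Y _
  have h2 : 0 ≤ cmi p U S (fun ω => (Y ω, V ω, X₁ ω, X₂ ω)) := cmi_nonneg p hp U S _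
  simp only [mi, cmi] at hMarkov h1 h2 ⊢
  have e1 : ent p (fun ω => ((U ω, V ω, X₁ ω, X₂ ω), S ω))
      = ent p (fun ω => ((U ω, V ω), (S ω, X₁ ω, X₂ ω))) :=
    ent_eq_of_inv p _ _ (fun q => ((q.1.1, q.1.2, q.2.2.1, q.2.2.2), q.2.1))
      (fun r => ((r.1.1, r.1.2.1), (r.2, r.1.2.2.1, r.1.2.2.2)))
      (fun _ => rfl) (fun _ => rfl)
  have e2 : ent p (fun ω => ((U ω, V ω), Y ω, (S ω, X₁ ω, X₂ ω)))
      = ent p (fun ω => (U ω, S ω, Y ω, V ω, X₁ ω, X₂ ω)) :=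
    ent_eq_of_inv p _ _
      (fun q => ((q.1, q.2.2.2.1), (q.2.2.1, q.2.1, q.2.2.2.2.1, q.2.2.2.2.2)))
      (fun r => (r.1.1, r.2.2.1, r.2.1, r.1.2, r.2.2.2.1, r.2.2.2.2))
      (fun _ => rfl) (fun _ => rfl)
  have e3 : ent p (fun ω => ((V ω, X₁ ω, X₂ ω), S ω))
      = ent p (fun ω => (V ω, S ω, X₁ ω, X₂ ω)) :=
    ent_eq_of_inv p _ _ (fun q => ((q.1, q.2.2.1, q.2.2.2), q.2.1))
      (fun r => (r.1.1, r.2, r.1.2.1, r.1.2.2))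
      (fun _ => rfl) (fun _ => rfl)
  have e4 : ent p (fun ω => (V ω, Y ω, S ω, X₁ ω, X₂ ω))
      = ent p (fun ω => (S ω, Y ω, V ω, X₁ ω, X₂ ω)) :=
    ent_eq_of_inv p _ _
      (fun q => (q.2.2.1, q.2.1, q.1, q.2.2.2.1, q.2.2.2.2))
      (fun r => (r.2.2.1, r.2.1, r.1, r.2.2.2.1, r.2.2.2.2))
      (fun _ => rfl) (fun _ => rfl)
  have e5 : ent p (fun ω => ((U ω, V ω, X₁ ω, X₂ ω), Y ω))
      = ent p (fun ω => (U ω, Y ω, V ω, X₁ ω, X₂ ω)) :=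
    ent_eq_of_inv p _ _
      (fun q => ((q.1, q.2.2.1, q.2.2.2.1, q.2.2.2.2), q.2.1))
      (fun r => (r.1.1, r.2, r.1.2.1, r.1.2.2.1, r.1.2.2.2))
      (fun _ => rfl) (fun _ => rfl)
  have e6 : ent p (fun ω => ((V ω, X₁ ω, X₂ ω), Y ω))
      = ent p (fun ω => (Y ω, V ω, X₁ ω, X₂ ω)) :=
    ent_eq_of_inv p _ _
      (fun q => ((q.2.1, q.2.2.1, q.2.2.2), q.1))
      (fun r => (r.2, r.1.1, r.1.2.1, r.1.2.2))
      (fun _ => rfl) (fun _ => rfl)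
  linarith [hMarkov, h1, h2, e1, e2, e3, e4, e5, e6]
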